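/- If G and H are groups with Property (FA), then the direct product G × H has Property (FA). -/

import Mathlib

private lemma list_map_eq_self {α : Type*} {f : α → α} :
    ∀ {l : List α}, l.map f = l → ∀ a ∈ l, f a = a := by
  intro l
  induction l with
  | nil => intro _ a ha; simp at ha
  | cons b t ih =>
      intro h a ha
      simp only [List.map_cons, List.cons.injEq] at h
      rcases List.mem_cons.mp ha with ha | ha
      · subst ha; exact h.1
      · exact ih h.2 a ha

private lemma reachable_induce {V : Type} {T : SimpleGraph V} {S : Set V} :
    ∀ {u v : V} (p : T.Walk u v), (∀ w ∈ p.support, w ∈ S) →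
      ∀ (hu : u ∈ S) (hv : v ∈ S), (T.induce S).Reachable ⟨u, hu⟩ ⟨v, hv⟩ := by
  intro u v p
  induction p with
  | nil => intro _ hu hv; rfl
  | @cons a b c hab q ih =>
      intro hsup hu hv
      have hb : b ∈ S := hsup b (by simp)
      have h1 : (T.induce S).Adj ⟨a, hu⟩ ⟨b, hb⟩ := hab
      exact h1.reachable.trans (ih (fun w hw => hsup w (by simp [hw])) hb hv)

/-- Property (FA): every action by graph automorphisms, without inversions, on a
simplicial tree has a global fixed point. -/
def HasFA (G : Type*) [Group G] : Prop :=
  ∀ (V : Type) (T : SimpleGraph V), T.IsTree →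
    ∀ ρ : G →* Equiv.Perm V,
      (∀ (g : G) (u v : V), T.Adj u v → T.Adj (ρ g u) (ρ g v)) →
      (∀ (g : G) (u v : V), T.Adj u v → ¬(ρ g u = v ∧ ρ g v = u)) →
      ∃ x : V, ∀ g : G, ρ g x = x

/-- A direct product of two groups with Property (FA) has Property (FA). -/
theorem stmt_3 {G H : Type*} [Group G] [Group H]
    (hG : HasFA G) (hH : HasFA H) : HasFA (G × H) := by
  intro V T hT ρ hadj hinv
  -- the G-action
  set ρG : G →* Equiv.Perm V := ρ.comp (MonoidHom.inl G H) with hρG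
  obtain ⟨x0, hx0⟩ := hG V T hT ρG
    (fun g u v h => hadj (g, 1) u v h) (fun g u v h => hinv (g, 1) u v h)
  -- the fixed set of G
  set S : Set V := {v | ∀ g : G, ρ (g, 1) v = v} with hS
  have hx0S : x0 ∈ S := hx0
  -- elements of ρ are graph homs
  have hmap : ∀ (a : G × H) {u v : V} (p : T.Walk u v) (hu : (ρ a) u = u)
      (hv : (ρ a) v = v), p.IsPath → ∀ w ∈ p.support, (ρ a) w = w := by
    intro a u v p hu hv hp
    let f : T →g T := ⟨ρ a, fun h => hadj a _ _ h⟩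
    have hinj : Function.Injective f := (ρ a).injective
    have hpath : ((p.map f).copy hu hv).IsPath := by
      rw [SimpleGraph.Walk.isPath_copy]
      exact SimpleGraph.Walk.map_isPath_of_injective hinj hp
    have huniq := hT.existsUnique_path u v
    obtain ⟨q, _, hq⟩ := huniq
    have h1 : (p.map f).copy hu hv = q := hq _ hpath
    have h2 : p = q := hq _ hp
    have hsup : p.support.map (ρ a) = p.support := by
      have := congrArg SimpleGraph.Walk.support (h1.trans h2.symm)
      simp [SimpleGraph.Walk.support_copy, SimpleGraph.Walk.support_map] at this
      exact this
    exact list_map_eq_self hsup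
  -- any two points of S are joined by a walk within S
  have hconn : ∀ u v : V, u ∈ S → v ∈ S →
      ∃ p : T.Walk u v, ∀ w ∈ p.support, w ∈ S := by
    intro u v hu hv
    obtain ⟨p, hp, -⟩ := hT.existsUnique_path u v
    exact ⟨p, fun w hw g => hmap (g, 1) p (hu g) (hv g) hp w hw⟩
  -- the induced graph on S
  set T' : SimpleGraph S := T.induce S with hT'
  have comp : ∀ (a b : G × H) (w : V), ρ (a * b) w = ρ a (ρ b w) := by
    intro a b w; rw [map_mul]; rfl
  have hT'tree : T'.IsTree := by
    refine ⟨?_, ?_⟩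
    · rw [SimpleGraph.connected_iff]
      refine ⟨fun u v => ?_, ⟨⟨x0, hx0S⟩⟩⟩
      obtain ⟨p, hp⟩ := hconn u.1 v.1 u.2 v.2
      simpa using reachable_induce p hp u.2 v.2
    · intro v c hc
      exact hT.2 (c.map (SimpleGraph.Embedding.induce (G := T) S).toHom)
        (hc.map (SimpleGraph.Embedding.induce (G := T) S).injective)
  -- the H-action on S
  have hSiff : ∀ (h : H) (v : V), v ∈ S ↔ ρ (1, h) v ∈ S := by
    intro h v
    constructor
    · intro hv g
      have : (g, (1 : H)) * (1, h) = (1, h) * (g, 1) := by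
        ext <;> simp
      calc ρ (g, 1) (ρ (1, h) v) = ρ ((g, 1) * (1, h)) v := (comp _ _ _).symm
        _ = ρ ((1, h) * (g, 1)) v := by rw [this]
        _ = ρ (1, h) (ρ (g, 1) v) := comp _ _ _
        _ = ρ (1, h) v := by rw [hv g]
    · intro hv g
      have key : ∀ g' : G, ρ (g', 1) (ρ (1, h) v) = ρ (1, h) (ρ (g', 1) v) := by
        intro g'
        have : (g', (1 : H)) * (1, h) = (1, h) * (g', 1) := by ext <;> simp
        calc ρ (g', 1) (ρ (1, h) v) = ρ ((g', 1) * (1, h)) v := (comp _ _ _).symm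
          _ = ρ ((1, h) * (g', 1)) v := by rw [this]
          _ = ρ (1, h) (ρ (g', 1) v) := comp _ _ _
      have := (key g).symm.trans (hv g)
      exact (ρ (1, h)).injective this
  set σ : H →* Equiv.Perm S :=
    { toFun := fun h => Equiv.Perm.subtypePerm (ρ (1, h)) (fun v => (hSiff h v).symm)
      map_one' := by
        ext v
        have : ((1 : G), (1 : H)) = (1 : G × H) := rfl
        simp [Equiv.Perm.subtypePerm_apply, this]
      map_mul' := by
        intro h1 h2
        ext v
        have h12 : ((1 : G), h1 * h2) = (1, h1) * (1, h2) := by ext <;> simp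
        simp only [Equiv.Perm.mul_apply, Equiv.Perm.subtypePerm_apply, h12]
        exact comp _ _ _ } with hσ
  have hσadj : ∀ (h : H) (u v : S), T'.Adj u v → T'.Adj (σ h u) (σ h v) := by
    intro h u v huv
    exact hadj (1, h) u.1 v.1 huv
  have hσinv : ∀ (h : H) (u v : S), T'.Adj u v → ¬(σ h u = v ∧ σ h v = u) := by
    intro h u v huv ⟨h1, h2⟩
    exact hinv (1, h) u.1 v.1 huv ⟨congrArg Subtype.val h1, congrArg Subtype.val h2⟩
  obtain ⟨z, hz⟩ := hH S T' hT'tree σ hσadj hσinv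
  refine ⟨z.1, fun gh => ?_⟩
  obtain ⟨g, h⟩ := gh
  have h1 : ρ (1, h) z.1 = z.1 := congrArg Subtype.val (hz h)
  have h2 : ρ (g, 1) z.1 = z.1 := z.2 g
  have : (g, h) = (g, (1 : H)) * (1, h) := by ext <;> simp
  rw [this, comp, h1, h2]
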